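/- There exist real numbers λ₁,λ₂,λ₃ such that the 9×9 matrix I₃ ⊗ I₃ + (3/2)·(λ₁²·J₁⊗J₁ − λ₂²·J₂⊗J₂ + λ₃²·J₃⊗J₃) is positive semidefinite (so Φ∘Φ is completely positive), yet there exists a linear map L on matrices indexed by Fin 3 × Fin 3 satisfying L(A ⊗ B) = Φ(A) ⊗ Φ(B) for all A, B ∈ M₃(ℂ) such that L(P) is not positive semidefinite, where P ∈ M₉(ℂ) is the rank-one projector onto the vector φ = (e₀⊗e₀ + e₂⊗e₂)/√2, i.e., P has entries 1/2 at positions ((0,0),(0,0)), ((0,0),(2,2)), ((2,2),(0,0)), ((2,2),(2,2)) and 0 elsewhere. -/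

import Mathlib

open Matrix Kronecker
open scoped ComplexOrder

/-- The spin-1 angular momentum matrix J₁. -/
noncomputable def spinOneJ1 : Matrix (Fin 3) (Fin 3) ℂ :=
  ((1 / Real.sqrt 2 : ℝ) : ℂ) • !![0, 1, 0; 1, 0, 1; 0, 1, 0]

/-- The spin-1 angular momentum matrix J₂. -/
noncomputable def spinOneJ2 : Matrix (Fin 3) (Fin 3) ℂ :=
  ((1 / Real.sqrt 2 : ℝ) : ℂ) • !![0, -Complex.I, 0; Complex.I, 0, -Complex.I; 0, Complex.I, 0]

/-- The spin-1 angular momentum matrix J₃. -/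
def spinOneJ3 : Matrix (Fin 3) (Fin 3) ℂ := !![1, 0, 0; 0, 0, 0; 0, 0, -1]

/-- The spin-1 polarization-scaling map
`Φ(X) = (1/3)·tr(X)·I₃ + (1/2)·Σᵢ λᵢ·tr(X Jᵢ)·Jᵢ`. -/
noncomputable def Phi3 (l1 l2 l3 : ℝ) (X : Matrix (Fin 3) (Fin 3) ℂ) :
    Matrix (Fin 3) (Fin 3) ℂ :=
  (1 / 3 : ℂ) • X.trace • (1 : Matrix (Fin 3) (Fin 3) ℂ) +
    (1 / 2 : ℂ) • ((l1 : ℂ) • (X * spinOneJ1).trace • spinOneJ1 +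
      (l2 : ℂ) • (X * spinOneJ2).trace • spinOneJ2 +
      (l3 : ℂ) • (X * spinOneJ3).trace • spinOneJ3)

lemma hc : ((1 / Real.sqrt 2 : ℝ) : ℂ) * ((1 / Real.sqrt 2 : ℝ) : ℂ) = 1 / 2 := by
  rw [← Complex.ofReal_mul, div_mul_div_comm, Real.mul_self_sqrt (by norm_num)]
  norm_num

def bMat : Matrix (Fin 4) (Fin 3 × Fin 3) ℂ :=
  Matrix.of fun r p =>
    if r = 0 then (if p = (0,0) ∨ p = (1,1) ∨ p = (2,2) then 1 else 0)
    else if r = 1 then (if p = (0,0) then 1 else if p = (2,2) then -1 else 0)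
    else if r = 2 then (if p = (0,1) ∨ p = (1,2) then 1 else 0)
    else (if p = (1,0) ∨ p = (2,1) then 1 else 0)

set_option maxHeartbeats 1000000 in
theorem part1 :
    ((1 : Matrix (Fin 3) (Fin 3) ℂ) ⊗ₖ (1 : Matrix (Fin 3) (Fin 3) ℂ) +
      ((3 / 2 : ℝ) : ℂ) • ((((4/5 : ℝ) ^ 2 : ℝ) : ℂ) • (spinOneJ1 ⊗ₖ spinOneJ1) -
        (((4/5 : ℝ) ^ 2 : ℝ) : ℂ) • (spinOneJ2 ⊗ₖ spinOneJ2) +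
        (((4/5 : ℝ) ^ 2 : ℝ) : ℂ) • (spinOneJ3 ⊗ₖ spinOneJ3))).PosSemidef := by
  have h1 : (Matrix.diagonal fun _ : Fin 3 × Fin 3 => ((1/25 : ℝ) : ℂ)).PosSemidef := by
    refine Matrix.PosSemidef.diagonal fun p => ?_
    rw [Pi.zero_apply, Complex.zero_le_real]; norm_num
  have h2 : (Matrix.diagonal fun _ : Fin 4 => ((24/25 : ℝ) : ℂ)).PosSemidef := by
    refine Matrix.PosSemidef.diagonal fun p => ?_
    rw [Pi.zero_apply, Complex.zero_le_real]; norm_num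
  have h3 := h2.conjTranspose_mul_mul_same bMat
  have h := h1.add h3
  convert h using 1
  have hdiag : (Matrix.diagonal fun _ : Fin 4 => ((24/25 : ℝ) : ℂ)) =
      ((24/25 : ℝ) : ℂ) • (1 : Matrix (Fin 4) (Fin 4) ℂ) := by
    ext p q
    rcases eq_or_ne p q with h | h
    · simp [h]
    · simp [Matrix.diagonal_apply_ne _ h, Matrix.one_apply_ne h]
  rw [hdiag, Matrix.mul_smul, Matrix.smul_mul, Matrix.mul_one]
  have e1 : spinOneJ1 ⊗ₖ spinOneJ1 = (1/2 : ℂ) •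
      ((!![0, 1, 0; 1, 0, 1; 0, 1, 0] : Matrix (Fin 3) (Fin 3) ℂ) ⊗ₖ !![0, 1, 0; 1, 0, 1; 0, 1, 0]) := by
    rw [spinOneJ1, smul_kronecker, kronecker_smul, smul_smul, hc]
  have e2 : spinOneJ2 ⊗ₖ spinOneJ2 = (1/2 : ℂ) •
      ((!![0, -Complex.I, 0; Complex.I, 0, -Complex.I; 0, Complex.I, 0] : Matrix (Fin 3) (Fin 3) ℂ) ⊗ₖ
        !![0, -Complex.I, 0; Complex.I, 0, -Complex.I; 0, Complex.I, 0]) := by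
    rw [spinOneJ2, smul_kronecker, kronecker_smul, smul_smul, hc]
  rw [e1, e2]
  ext ⟨i, j⟩ ⟨k, l⟩
  simp only [bMat, Matrix.mul_apply, Matrix.conjTranspose_apply, Matrix.of_apply,
    Fin.sum_univ_four, Matrix.add_apply, Matrix.sub_apply, Matrix.smul_apply,
    Matrix.kroneckerMap_apply, Matrix.one_apply, Matrix.diagonal_apply, smul_eq_mul,
    spinOneJ3]
  fin_cases i <;> fin_cases j <;> fin_cases k <;> fin_cases l <;>
    · simp (config := { decide := true }) only [Fin.isValue, Prod.mk.injEq, and_self, and_false,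
        false_and, true_and, and_true, or_self, or_false, false_or, if_true, if_false, ite_true,
        ite_false, Matrix.cons_val', Matrix.cons_val_zero, Matrix.cons_val_one, Matrix.head_cons,
        Matrix.head_fin_const, Matrix.empty_val', Matrix.cons_val_fin_one, _root_.map_one,
        map_zero, map_neg, star_one, star_zero]
      norm_num [Complex.ext_iff]

noncomputable def phiL (l1 l2 l3 : ℝ) :
    Matrix (Fin 3) (Fin 3) ℂ →ₗ[ℂ] Matrix (Fin 3) (Fin 3) ℂ where
  toFun := Phi3 l1 l2 l3
  map_add' X Y := by
    simp only [Phi3, Matrix.add_mul, Matrix.trace_add, add_smul, smul_add]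
    abel
  map_smul' c X := by
    simp only [Phi3, Matrix.smul_mul, Matrix.trace_smul, smul_smul, smul_add,
      RingHom.id_apply, smul_eq_mul]
    module

noncomputable def bigL (l1 l2 l3 : ℝ) :
    Matrix (Fin 3 × Fin 3) (Fin 3 × Fin 3) ℂ →ₗ[ℂ] Matrix (Fin 3 × Fin 3) (Fin 3 × Fin 3) ℂ where
  toFun X := ∑ p : Fin 3 × Fin 3, ∑ q : Fin 3 × Fin 3,
    X p q • (phiL l1 l2 l3 (Matrix.single p.1 q.1 1) ⊗ₖ
      phiL l1 l2 l3 (Matrix.single p.2 q.2 1))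
  map_add' X Y := by
    simp [Matrix.add_apply, add_smul, Finset.sum_add_distrib]
  map_smul' c X := by
    simp [Matrix.smul_apply, smul_eq_mul, mul_smul, Finset.smul_sum]

lemma phiL_eq_sum (l1 l2 l3 : ℝ) (A : Matrix (Fin 3) (Fin 3) ℂ) :
    phiL l1 l2 l3 A = ∑ a : Fin 3, ∑ b : Fin 3,
      A a b • phiL l1 l2 l3 (Matrix.single a b 1) := by
  conv_lhs => rw [Matrix.matrix_eq_sum_single A]
  rw [map_sum]
  refine Finset.sum_congr rfl fun a _ => ?_
  rw [map_sum]
  refine Finset.sum_congr rfl fun b _ => ?_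
  rw [← _root_.map_smul]
  congr 1
  rw [Matrix.smul_single, smul_eq_mul, mul_one]

lemma bigL_kron (l1 l2 l3 : ℝ) (A B : Matrix (Fin 3) (Fin 3) ℂ) :
    bigL l1 l2 l3 (A ⊗ₖ B) = phiL l1 l2 l3 A ⊗ₖ phiL l1 l2 l3 B := by
  have hd : bigL l1 l2 l3 (A ⊗ₖ B) = ∑ p : Fin 3 × Fin 3, ∑ q : Fin 3 × Fin 3,
      (A ⊗ₖ B) p q • (phiL l1 l2 l3 (Matrix.single p.1 q.1 1) ⊗ₖ
        phiL l1 l2 l3 (Matrix.single p.2 q.2 1)) := rfl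
  rw [hd, phiL_eq_sum l1 l2 l3 A, phiL_eq_sum l1 l2 l3 B]
  ext ⟨i, j⟩ ⟨k, l⟩
  simp only [Matrix.sum_apply, Matrix.add_apply, Matrix.smul_apply, Matrix.kroneckerMap_apply, smul_eq_mul,
    Fintype.sum_prod_type, Fin.sum_univ_three]
  ring

lemma phiL_apply (l1 l2 l3 : ℝ) (X : Matrix (Fin 3) (Fin 3) ℂ) :
    phiL l1 l2 l3 X = Phi3 l1 l2 l3 X := rfl

lemma phiL_entry (a b x y : Fin 3) :
    phiL (4/5) (4/5) (4/5) (Matrix.single a b 1) x y =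
      (if a = b then (1/3 : ℂ) else 0) * (if x = y then 1 else 0) +
        (2/5 : ℂ) * spinOneJ3 b a * spinOneJ3 x y +
        (1/2 : ℂ) * (4/5 : ℂ) * (spinOneJ1 b a * spinOneJ1 x y + spinOneJ2 b a * spinOneJ2 x y) := by
  rw [phiL_apply, Phi3]
  have ht : ∀ J : Matrix (Fin 3) (Fin 3) ℂ, (Matrix.single a b 1 * J).trace = J b a := by
    intro J
    fin_cases a <;> fin_cases b <;>
      simp [Matrix.trace_fin_three, Matrix.mul_apply, Fin.sum_univ_three, Matrix.single]
  have htr : (Matrix.single a b (1:ℂ)).trace = if a = b then 1 else 0 := by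
    fin_cases a <;> fin_cases b <;>
      simp [Matrix.trace_fin_three, Matrix.single]
  simp only [ht, htr, Matrix.add_apply, Matrix.smul_apply, Matrix.one_apply, smul_eq_mul]
  push_cast
  split_ifs <;> ring

noncomputable def Pm : Matrix (Fin 3 × Fin 3) (Fin 3 × Fin 3) ℂ :=
  Matrix.of fun p q : Fin 3 × Fin 3 =>
    if (p = (0, 0) ∨ p = (2, 2)) ∧ (q = (0, 0) ∨ q = (2, 2)) then (1 / 2 : ℂ) else 0

lemma key_entry : (bigL (4/5) (4/5) (4/5) Pm) ((0 : Fin 3), (2 : Fin 3)) ((0 : Fin 3), (2 : Fin 3)) =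
    ((-11/225 : ℝ) : ℂ) := by
  have hd : bigL (4/5) (4/5) (4/5) Pm = ∑ p : Fin 3 × Fin 3, ∑ q : Fin 3 × Fin 3,
      Pm p q • (phiL (4/5) (4/5) (4/5) (Matrix.single p.1 q.1 1) ⊗ₖ
        phiL (4/5) (4/5) (4/5) (Matrix.single p.2 q.2 1)) := rfl
  rw [hd]
  simp only [Matrix.sum_apply, Matrix.smul_apply, Matrix.kroneckerMap_apply, smul_eq_mul,
    Fintype.sum_prod_type, Fin.sum_univ_three, Pm, Matrix.of_apply, Matrix.add_apply,
    Prod.mk.injEq, and_self, and_false, false_and, true_and, and_true, or_self, or_false,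
    false_or, true_or, or_true, if_true, if_false, ite_true, ite_false, zero_smul, zero_mul,
    mul_zero, zero_add, add_zero]
  simp only [phiL_entry, spinOneJ1, spinOneJ2, spinOneJ3, Matrix.smul_apply,
    Matrix.cons_val', Matrix.cons_val_zero, Matrix.cons_val_one, Matrix.head_cons,
    Matrix.head_fin_const, Matrix.empty_val', Matrix.cons_val_fin_one, smul_eq_mul]
  simp (config := { decide := true }) [Matrix.vecHead, Matrix.vecTail]
  norm_num

lemma quad_single (M : Matrix (Fin 3 × Fin 3) (Fin 3 × Fin 3) ℂ) (u : Fin 3 × Fin 3) :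
    star (Pi.single u (1:ℂ)) ⬝ᵥ M *ᵥ Pi.single u 1 = M u u := by
  classical
  simp [dotProduct, Matrix.mulVec, Pi.single_apply, Pi.star_apply, apply_ite, mul_ite, ite_mul,
    mul_zero, zero_mul, mul_one, one_mul, star_one, star_zero, Finset.sum_ite_eq,
    Finset.sum_ite_eq']

lemma not_psd : ¬ (bigL (4/5) (4/5) (4/5) Pm).PosSemidef := by
  intro h
  have h2 := h.dotProduct_mulVec_nonneg (Pi.single ((0 : Fin 3), (2 : Fin 3)) 1)
  rw [quad_single, key_entry, Complex.zero_le_real] at h2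
  norm_num at h2

theorem exists_square_cp_but_not_two_tensor_stable_positive :
    ∃ l1 l2 l3 : ℝ,
      ((1 : Matrix (Fin 3) (Fin 3) ℂ) ⊗ₖ (1 : Matrix (Fin 3) (Fin 3) ℂ) +
        ((3 / 2 : ℝ) : ℂ) • (((l1 ^ 2 : ℝ) : ℂ) • (spinOneJ1 ⊗ₖ spinOneJ1) -
          ((l2 ^ 2 : ℝ) : ℂ) • (spinOneJ2 ⊗ₖ spinOneJ2) +
          ((l3 ^ 2 : ℝ) : ℂ) • (spinOneJ3 ⊗ₖ spinOneJ3))).PosSemidef ∧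
      ∃ L : Matrix (Fin 3 × Fin 3) (Fin 3 × Fin 3) ℂ →ₗ[ℂ]
            Matrix (Fin 3 × Fin 3) (Fin 3 × Fin 3) ℂ,
        (∀ A B : Matrix (Fin 3) (Fin 3) ℂ, L (A ⊗ₖ B) = Phi3 l1 l2 l3 A ⊗ₖ Phi3 l1 l2 l3 B) ∧
        ¬ (L (Matrix.of fun p q : Fin 3 × Fin 3 =>
            if (p = (0, 0) ∨ p = (2, 2)) ∧ (q = (0, 0) ∨ q = (2, 2)) then (1 / 2 : ℂ)
            else 0)).PosSemidef := by
  refine ⟨4/5, 4/5, 4/5, part1, bigL (4/5) (4/5) (4/5), fun A B => bigL_kron _ _ _ A B, not_psd⟩
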